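/- Let X be a real Banach space, K ⊆ X a cone with nonempty interior, and L : X → X a strongly positive bounded linear operator. Suppose r ∈ ℝ is an eigenvalue of L with an eigenvector x in the interior of K (L x = r x). Let y ∈ K \ {0}. Then the equation r·z − L z = y has no solution z ∈ X at all. -/

import Mathlib

section aux
variable {X : Type*} [NormedAddCommGroup X] [NormedSpace ℝ X]
  (K : Set X)

lemma aux_add_mem (hKconv : Convex ℝ K)
    (hKscale : ∀ t : ℝ, 0 ≤ t → ∀ y ∈ K, t • y ∈ K)
    {a b : X} (ha : a ∈ K) (hb : b ∈ K) : a + b ∈ K := by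
  have h := hKconv ha hb (by norm_num : (0:ℝ) ≤ 1/2) (by norm_num : (0:ℝ) ≤ 1/2) (by norm_num)
  have h2 := hKscale 2 (by norm_num) _ h
  have : (2:ℝ) • ((1/2 : ℝ) • a + (1/2 : ℝ) • b) = a + b := by
    rw [smul_add, smul_smul, smul_smul]; norm_num
  rwa [this] at h2

lemma aux_interior_add (hKconv : Convex ℝ K)
    (hKscale : ∀ t : ℝ, 0 ≤ t → ∀ y ∈ K, t • y ∈ K)
    {a b : X} (ha : a ∈ interior K) (hb : b ∈ K) : a + b ∈ interior K := by
  have hopen : IsOpen ((· + b) '' interior K) := (isOpenMap_add_right b) _ isOpen_interior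
  have hsub : ((· + b) '' interior K) ⊆ K := by
    rintro _ ⟨u, hu, rfl⟩
    exact aux_add_mem K hKconv hKscale (interior_subset hu) hb
  exact interior_maximal hsub hopen ⟨a, ha, rfl⟩

lemma aux_smul_interior
    (hKscale : ∀ t : ℝ, 0 ≤ t → ∀ y ∈ K, t • y ∈ K)
    {c : ℝ} (hc : 0 < c) {a : X} (ha : a ∈ interior K) : c • a ∈ interior K := by
  have hopen : IsOpen ((c • ·) '' interior K) := (isOpenMap_smul₀ hc.ne') _ isOpen_interior
  have hsub : ((c • ·) '' interior K) ⊆ K := by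
    rintro _ ⟨u, hu, rfl⟩
    exact hKscale c hc.le _ (interior_subset hu)
  exact interior_maximal hsub hopen ⟨a, ha, rfl⟩

end aux

theorem resolvent_equation_no_solution_at_eigenvalue
    {X : Type*} [NormedAddCommGroup X] [NormedSpace ℝ X] [CompleteSpace X]
    (K : Set X)
    (hKne : K.Nonempty)
    (hKclosed : IsClosed K)
    (hKconv : Convex ℝ K)
    (hKscale : ∀ t : ℝ, 0 ≤ t → ∀ y ∈ K, t • y ∈ K)
    (hKsalient : ∀ y ∈ K, -y ∈ K → y = 0)
    (hKint : (interior K).Nonempty)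
    (L : X →L[ℝ] X)
    (hLsp : ∀ y ∈ K, y ≠ 0 → L y ∈ interior K)
    (r : ℝ) (x : X) (hx : x ∈ interior K) (hx0 : x ≠ 0) (hLx : L x = r • x)
    (y : X) (hyK : y ∈ K) (hy0 : y ≠ 0) :
    ¬ ∃ z : X, r • z - L z = y := by
  rintro ⟨z, hz⟩
  have hxK : x ∈ K := interior_subset hx
  -- 0 is not in the interior of K
  have h0int : (0 : X) ∉ interior K := by
    intro h0
    rcases Metric.isOpen_iff.1 isOpen_interior 0 h0 with ⟨ε, hε, hball⟩
    set c : ℝ := ε / (2 * ‖x‖) with hc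
    have hxn : 0 < ‖x‖ := norm_pos_iff.2 hx0
    have hcpos : 0 < c := by positivity
    have hmem : ∀ v : X, v = c • x ∨ v = -(c • x) → v ∈ K := by
      rintro v (rfl | rfl) <;>
      · refine interior_subset (hball ?_)
        simp only [Metric.mem_ball, dist_zero_right, norm_neg, norm_smul, Real.norm_eq_abs,
          abs_of_pos hcpos, hc]
        rw [abs_of_pos (show 0 < ε / (2 * ‖x‖) from hcpos), div_mul_eq_mul_div, mul_comm]
        calc ‖x‖ * ε / (2 * ‖x‖) = ε / 2 := by field_simp
        _ < ε := by linarith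
    have := hKsalient (c • x) (hmem _ (Or.inl rfl)) (hmem _ (Or.inr rfl))
    exact hx0 (by simpa [hcpos.ne'] using this)
  -- r > 0
  have hrx : r • x ∈ interior K := hLx ▸ hLsp x hxK hx0
  have hr : 0 < r := by
    by_contra h
    push_neg at h
    have hneg : -(r • x) ∈ K := by
      have := hKscale (-r) (by linarith) x hxK
      rwa [neg_smul] at this
    have := hKsalient (r • x) (interior_subset hrx) hneg
    rw [this] at hrx
    exact h0int hrx
  have hz0 : z ≠ 0 := by
    rintro rfl
    simp at hz
    exact hy0 hz.symm
  have hLz : L z = r • z - y := by rw [← hz]; abel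
  -- key: if x + t z ∈ K with t ≥ 0, then x + t z ∈ interior K
  have hkey : ∀ t : ℝ, 0 ≤ t → x + t • z ∈ K → x + t • z ∈ interior K := by
    intro t ht hmem
    have hne : x + t • z ≠ 0 := by
      intro h
      rcases ht.lt_or_eq with ht' | ht'
      · have hzx : z = -(t⁻¹ • x) := by
          rw [← neg_smul]
          have : t • z = -x := by linear_combination (norm := abel) h
          calc z = t⁻¹ • (t • z) := by rw [smul_smul, inv_mul_cancel₀ ht'.ne', one_smul]
          _ = (-t⁻¹) • x := by rw [this, smul_neg, neg_smul]
        apply hy0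
        rw [← hz, hzx]
        simp [hLx, smul_smul, smul_comm]
        module
      · rw [← ht'] at h; simp at h; exact hx0 h
    have hL : L (x + t • z) = r • (x + t • z) - t • y := by
      rw [map_add, map_smul, hLx, hLz, smul_sub, smul_comm]
      module
    have hsum : r • (x + t • z) ∈ interior K := by
      have h1 : L (x + t • z) ∈ interior K := hLsp _ hmem hne
      have h2 : t • y ∈ K := hKscale t ht y hyK
      have : L (x + t • z) + t • y ∈ interior K := aux_interior_add K hKconv hKscale h1 h2
      rwa [hL, sub_add_cancel] at this
    have := aux_smul_interior K hKscale (inv_pos.2 hr) hsum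
    rwa [smul_smul, inv_mul_cancel₀ hr.ne', one_smul] at this
  -- the set A
  set A : Set ℝ := {t | 0 ≤ t ∧ x + t • z ∈ K} with hA
  have hA0 : (0:ℝ) ∈ A := ⟨le_refl 0, by simpa using hxK⟩
  have hAclosed : IsClosed A := by
    have : A = Set.Ici (0:ℝ) ∩ (fun t : ℝ => x + t • z) ⁻¹' K := rfl
    rw [this]
    exact isClosed_Ici.inter (hKclosed.preimage (continuous_const.add (continuous_id.smul continuous_const)))
  -- A is unbounded above
  have hAunbdd : ¬ BddAbove A := by
    intro hbdd
    have hs : sSup A ∈ A := hAclosed.csSup_mem ⟨0, hA0⟩ hbdd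
    obtain ⟨hs0, hsK⟩ := hs
    have hint := hkey _ hs0 hsK
    rcases Metric.isOpen_iff.1 isOpen_interior _ hint with ⟨δ, hδ, hball⟩
    have hzn : 0 < ‖z‖ := norm_pos_iff.2 hz0
    set ε : ℝ := δ / (2 * ‖z‖) with hε
    have hεpos : 0 < ε := by positivity
    have hnew : sSup A + ε ∈ A := by
      refine ⟨by linarith, interior_subset (hball ?_)⟩
      simp only [Metric.mem_ball, dist_eq_norm]
      have : x + (sSup A + ε) • z - (x + sSup A • z) = ε • z := by
        rw [add_smul]; abel
      rw [this, norm_smul, Real.norm_eq_abs, abs_of_pos hεpos, hε]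
      rw [div_mul_eq_mul_div]
      calc δ * ‖z‖ / (2 * ‖z‖) = δ / 2 := by field_simp
      _ < δ := by linarith
    have := le_csSup hbdd hnew
    linarith
  -- hence z ∈ K
  have hzK : z ∈ K := by
    rw [← hKclosed.closure_eq]
    rw [Metric.mem_closure_iff]
    intro ε hε
    obtain ⟨t, htA, ht⟩ := not_bddAbove_iff.1 hAunbdd (max 1 (‖x‖ / ε))
    have ht1 : 1 < t := lt_of_le_of_lt (le_max_left _ _) ht
    have ht0 : 0 < t := by linarith
    refine ⟨t⁻¹ • (x + t • z), hKscale t⁻¹ (by positivity) _ htA.2, ?_⟩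
    have : t⁻¹ • (x + t • z) = z + t⁻¹ • x := by
      rw [smul_add, smul_smul, inv_mul_cancel₀ ht0.ne', one_smul]; abel
    rw [this, dist_eq_norm]
    simp only [sub_add_cancel_left, norm_neg]
    rw [norm_smul, Real.norm_eq_abs, abs_of_pos (inv_pos.2 ht0)]
    have h2 : ‖x‖ / ε < t := lt_of_le_of_lt (le_max_right _ _) ht
    calc t⁻¹ * ‖x‖ = ‖x‖ / t := by ring
    _ < ε := by rw [div_lt_iff₀ ht0]; nlinarith [div_lt_iff₀ hε |>.1 h2]
  -- the set B for the second sup argument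
  set B : Set ℝ := {t | 0 ≤ t ∧ z - t • x ∈ K} with hB
  have hB0 : (0:ℝ) ∈ B := ⟨le_refl 0, by simpa using hzK⟩
  have hBclosed : IsClosed B := by
    have : B = Set.Ici (0:ℝ) ∩ (fun t : ℝ => z - t • x) ⁻¹' K := rfl
    rw [this]
    exact isClosed_Ici.inter (hKclosed.preimage (continuous_const.sub (continuous_id.smul continuous_const)))
  -- B is bounded above
  have hxn : 0 < ‖x‖ := norm_pos_iff.2 hx0
  have hzn : 0 < ‖z‖ := norm_pos_iff.2 hz0
  rcases Metric.isOpen_iff.1 isOpen_interior x hx with ⟨ε, hε, hball⟩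
  set c : ℝ := ε / (2 * ‖z‖) with hc
  have hcpos : 0 < c := by positivity
  have hxcz : x - c • z ∈ K := by
    refine interior_subset (hball ?_)
    simp only [Metric.mem_ball, dist_eq_norm]
    have : x - c • z - x = -(c • z) := by abel
    rw [this, norm_neg, norm_smul, Real.norm_eq_abs, abs_of_pos hcpos, hc, div_mul_eq_mul_div]
    calc ε * ‖z‖ / (2 * ‖z‖) = ε / 2 := by field_simp
    _ < ε := by linarith
  have hBbdd : BddAbove B := by
    refine ⟨c⁻¹, fun t ht => ?_⟩
    by_contra hcon
    push_neg at hcon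
    have ht0 : 0 < t := lt_trans (by positivity) hcon
    have h1 : (z - t • x) + t • (x - c • z) ∈ K :=
      aux_add_mem K hKconv hKscale ht.2 (hKscale t ht0.le _ hxcz)
    have heq : (z - t • x) + t • (x - c • z) = (1 - t * c) • z := by
      rw [smul_sub, sub_smul, smul_smul]; module
    rw [heq] at h1
    have htc : 0 < t * c - 1 := by
      have : 1 < t * c := by
        rw [← inv_mul_cancel₀ hcpos.ne']
        exact mul_lt_mul_of_pos_right hcon hcpos
      linarith
    have h2 : (t * c - 1) • z ∈ K := hKscale _ htc.le z hzK
    have h3 : -((t * c - 1) • z) ∈ K := by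
      have : -((t * c - 1) • z) = (1 - t * c) • z := by rw [← neg_smul]; ring_nf
      rwa [this]
    have := hKsalient _ h2 h3
    rw [smul_eq_zero] at this
    rcases this with h | h
    · linarith [htc]
    · exact hz0 h
  -- sup of B
  set s : ℝ := sSup B with hs
  have hsB : s ∈ B := hBclosed.csSup_mem ⟨0, hB0⟩ hBbdd
  obtain ⟨hs0, hsK⟩ := hsB
  set w : X := z - s • x with hw
  by_cases hw0 : w = 0
  · -- z = s x, so y = 0
    apply hy0
    have hzsx : z = s • x := by rwa [hw, sub_eq_zero] at hw0
    rw [← hz, hzsx, map_smul, hLx]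
    module
  · have hLw : L w = r • w - y := by
      rw [hw, map_sub, map_smul, hLx, hLz]
      module
    have hwint : w ∈ interior K := by
      have h1 : L w ∈ interior K := hLsp _ hsK hw0
      have h2 : L w + y ∈ interior K := aux_interior_add K hKconv hKscale h1 hyK
      rw [hLw, sub_add_cancel] at h2
      have := aux_smul_interior K hKscale (inv_pos.2 hr) h2
      rwa [smul_smul, inv_mul_cancel₀ hr.ne', one_smul] at this
    rcases Metric.isOpen_iff.1 isOpen_interior w hwint with ⟨δ, hδ, hball'⟩
    set ε' : ℝ := δ / (2 * ‖x‖) with hε'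
    have hε'pos : 0 < ε' := by positivity
    have hnew : s + ε' ∈ B := by
      refine ⟨by linarith, interior_subset (hball' ?_)⟩
      simp only [Metric.mem_ball, dist_eq_norm]
      have : z - (s + ε') • x - w = -(ε' • x) := by rw [hw, add_smul]; abel
      rw [this, norm_neg, norm_smul, Real.norm_eq_abs, abs_of_pos hε'pos, hε', div_mul_eq_mul_div]
      calc δ * ‖x‖ / (2 * ‖x‖) = δ / 2 := by field_simp
      _ < δ := by linarith
    have := le_csSup hBbdd hnew
    simp only [← hs] at this
    linarith
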